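/- Every homogeneous polynomial of degree 3 in ℂ[x,y,z] that vanishes at the nine projective points [0:1:1], [1:0:1], [0:−5:1], [0:10:1], [5:0:3], [10:0:3], [5:5:2], [1:4:1], [4:1:1] is a scalar multiple of x·y·(x+y−5z); in particular the space of such cubic forms has dimension 1. -/

import Mathlib

open MvPolynomial

noncomputable section

/-- The conic `Q = x² + y² + z² − 2xy − 2xz − 2yz`. -/
def Q : MvPolynomial (Fin 3) ℂ :=
  X 0 ^ 2 + X 1 ^ 2 + X 2 ^ 2 - 2 * X 0 * X 1 - 2 * X 0 * X 2 - 2 * X 1 * X 2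

/-- Coordinates of the nine points. -/
def pts : Fin 9 → (Fin 3 → ℂ) :=
  ![![0, 1, 1], ![1, 0, 1], ![0, (-5), 1], ![0, 10, 1], ![5, 0, 3], ![10, 0, 3], ![5, 5, 2], ![1, 4, 1], ![4, 1, 1]]

def mm (a b c : ℕ) : Fin 3 →₀ ℕ :=
  Finsupp.single 0 a + Finsupp.single 1 b + Finsupp.single 2 c

lemma mm_apply0 (a b c : ℕ) : mm a b c 0 = a := by
  simp [mm, Finsupp.single_apply]

lemma mm_apply1 (a b c : ℕ) : mm a b c 1 = b := by
  simp [mm, Finsupp.single_apply]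

lemma mm_apply2 (a b c : ℕ) : mm a b c 2 = c := by
  simp [mm, Finsupp.single_apply]

lemma d_eq_mm (d : Fin 3 →₀ ℕ) : d = mm (d 0) (d 1) (d 2) := by
  ext i
  fin_cases i <;> simp [mm, Finsupp.single_apply]

lemma mm_inj {a b c x y z : ℕ} : mm a b c = mm x y z ↔ a = x ∧ b = y ∧ c = z := by
  constructor
  · intro h
    refine ⟨?_, ?_, ?_⟩
    · have := DFunLike.congr_fun h 0
      simpa [mm_apply0] using this
    · have := DFunLike.congr_fun h 1
      simpa [mm_apply1] using this
    · have := DFunLike.congr_fun h 2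
      simpa [mm_apply2] using this
  · rintro ⟨rfl, rfl, rfl⟩; rfl

lemma mm_degree (a b c : ℕ) : (mm a b c).degree = a + b + c := by
  have : (mm a b c).degree = ∑ i : Fin 3, mm a b c i := by
    rw [Finsupp.degree_apply, Finset.sum_subset (Finset.subset_univ _)]
    intro x _ hx
    simpa using hx
  rw [this, Fin.sum_univ_three, mm_apply0, mm_apply1, mm_apply2]

lemma cxm (a : ℂ) (i j k : ℕ) :
    C a * X 0 ^ i * X 1 ^ j * X 2 ^ k = monomial (mm i j k) a := by
  simp [X_pow_eq_monomial, monomial_mul, C_mul_monomial, mm, mul_assoc]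

lemma deg3 (d : Fin 3 →₀ ℕ) : d.degree = d 0 + d 1 + d 2 := by
  rw [Finsupp.degree_apply, Finset.sum_subset (Finset.subset_univ _), Fin.sum_univ_three]
  intro x _ hx
  simpa using hx

set_option maxHeartbeats 1000000 in
lemma decomp (F : MvPolynomial (Fin 3) ℂ) (hF : F.IsHomogeneous 3) :
    F = C (coeff (mm 3 0 0) F) * X 0 ^ 3 * X 1 ^ 0 * X 2 ^ 0 +
      C (coeff (mm 2 1 0) F) * X 0 ^ 2 * X 1 ^ 1 * X 2 ^ 0 +
      C (coeff (mm 2 0 1) F) * X 0 ^ 2 * X 1 ^ 0 * X 2 ^ 1 +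
      C (coeff (mm 1 2 0) F) * X 0 ^ 1 * X 1 ^ 2 * X 2 ^ 0 +
      C (coeff (mm 1 1 1) F) * X 0 ^ 1 * X 1 ^ 1 * X 2 ^ 1 +
      C (coeff (mm 1 0 2) F) * X 0 ^ 1 * X 1 ^ 0 * X 2 ^ 2 +
      C (coeff (mm 0 3 0) F) * X 0 ^ 0 * X 1 ^ 3 * X 2 ^ 0 +
      C (coeff (mm 0 2 1) F) * X 0 ^ 0 * X 1 ^ 2 * X 2 ^ 1 +
      C (coeff (mm 0 1 2) F) * X 0 ^ 0 * X 1 ^ 1 * X 2 ^ 2 +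
      C (coeff (mm 0 0 3) F) * X 0 ^ 0 * X 1 ^ 0 * X 2 ^ 3 := by
  apply MvPolynomial.ext
  intro d
  simp only [cxm, coeff_add, coeff_monomial]
  rw [d_eq_mm d]
  simp only [mm_inj]
  generalize d 0 = a
  generalize d 1 = b
  generalize d 2 = c
  by_cases h3 : a + b + c = 3
  · have ha : a ≤ 3 := by omega
    have hb : b ≤ 3 := by omega
    have hc : c ≤ 3 := by omega
    interval_cases a <;> interval_cases b <;> interval_cases c <;> first | omega | norm_num
  · rw [hF.coeff_eq_zero (by rw [mm_degree]; omega)]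
    rw [if_neg (by omega), if_neg (by omega), if_neg (by omega), if_neg (by omega), if_neg (by omega), if_neg (by omega), if_neg (by omega), if_neg (by omega), if_neg (by omega), if_neg (by omega)]
    norm_num

lemma aeval_eq_eval' (p : Fin 3 → ℂ) (F : MvPolynomial (Fin 3) ℂ) :
    (aeval p) F = eval p F := rfl

set_option maxHeartbeats 1000000 in
theorem stmt3 :
    (∀ F : MvPolynomial (Fin 3) ℂ, F.IsHomogeneous 3 →
      (∀ i : Fin 9, eval (pts i) F = 0) →
      ∃ c : ℂ, F = c • (X 0 * X 1 * (X 0 + X 1 - 5 * X 2))) ∧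
    Module.finrank ℂ
      ↥(homogeneousSubmodule (Fin 3) ℂ 3 ⊓
        ⨅ i : Fin 9, LinearMap.ker (aeval (pts i)).toLinearMap) = 1 := by
  have part1 : ∀ F : MvPolynomial (Fin 3) ℂ, F.IsHomogeneous 3 →
      (∀ i : Fin 9, eval (pts i) F = 0) →
      ∃ c : ℂ, F = c • (X 0 * X 1 * (X 0 + X 1 - 5 * X 2)) := by
    intro F hF hvan
    have hd := decomp F hF
    have h0 : eval (![0, 1, 1] : Fin 3 → ℂ) F = 0 := hvan 0
    have h1 : eval (![1, 0, 1] : Fin 3 → ℂ) F = 0 := hvan 1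
    have h2 : eval (![0, -5, 1] : Fin 3 → ℂ) F = 0 := hvan 2
    have h3 : eval (![0, 10, 1] : Fin 3 → ℂ) F = 0 := hvan 3
    have h4 : eval (![5, 0, 3] : Fin 3 → ℂ) F = 0 := hvan 4
    have h5 : eval (![10, 0, 3] : Fin 3 → ℂ) F = 0 := hvan 5
    have h6 : eval (![5, 5, 2] : Fin 3 → ℂ) F = 0 := hvan 6
    have h7 : eval (![1, 4, 1] : Fin 3 → ℂ) F = 0 := hvan 7
    have h8 : eval (![4, 1, 1] : Fin 3 → ℂ) F = 0 := hvan 8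
    rw [hd] at h0 h1 h2 h3 h4 h5 h6 h7 h8
    simp only [eval_add, eval_mul, eval_pow, eval_C, eval_X, Matrix.cons_val_zero,
      Matrix.cons_val_one, Matrix.head_cons, Matrix.cons_val_two, Matrix.tail_cons]
      at h0 h1 h2 h3 h4 h5 h6 h7 h8
    have h300 : coeff (mm 3 0 0) F = 0 := by
      linear_combination (-5/48 : ℂ) * h0 + (27/112 : ℂ) * h1 + (-1/200 : ℂ) * h2 + (-1/300 : ℂ) * h3 + (-1/200 : ℂ) * h4 + (-1/700 : ℂ) * h5 + (-1/100 : ℂ) * h6 + (1/16 : ℂ) * h7 + (1/16 : ℂ) * h8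
    have h201 : coeff (mm 2 0 1) F = 0 := by
      linear_combination (5/8 : ℂ) * h0 + (-45/56 : ℂ) * h1 + (3/100 : ℂ) * h2 + (1/50 : ℂ) * h3 + (-1/300 : ℂ) * h4 + (19/1050 : ℂ) * h5 + (3/50 : ℂ) * h6 + (-3/8 : ℂ) * h7 + (-3/8 : ℂ) * h8
    have h102 : coeff (mm 1 0 2) F = 0 := by
      linear_combination (-475/432 : ℂ) * h0 + (-75/112 : ℂ) * h1 + (-19/360 : ℂ) * h2 + (-19/540 : ℂ) * h3 + (11/120 : ℂ) * h4 + (-17/420 : ℂ) * h5 + (-19/180 : ℂ) * h6 + (95/144 : ℂ) * h7 + (95/144 : ℂ) * h8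
    have h030 : coeff (mm 0 3 0) F = 0 := by
      linear_combination (-1/144 : ℂ) * h0 + (5/112 : ℂ) * h1 + (-1/600 : ℂ) * h2 + (1/900 : ℂ) * h3 + (-1/600 : ℂ) * h4 + (1/2100 : ℂ) * h5 + (1/900 : ℂ) * h6 + (-1/144 : ℂ) * h7 + (-1/144 : ℂ) * h8
    have h021 : coeff (mm 0 2 1) F = 0 := by
      linear_combination (5/216 : ℂ) * h0 + (-15/56 : ℂ) * h1 + (19/900 : ℂ) * h2 + (1/1350 : ℂ) * h3 + (1/100 : ℂ) * h4 + (-1/350 : ℂ) * h5 + (-1/150 : ℂ) * h6 + (1/24 : ℂ) * h7 + (1/24 : ℂ) * h8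
    have h012 : coeff (mm 0 1 2) F = 0 := by
      linear_combination (175/432 : ℂ) * h0 + (-225/112 : ℂ) * h1 + (-17/360 : ℂ) * h2 + (-11/540 : ℂ) * h3 + (3/40 : ℂ) * h4 + (-3/140 : ℂ) * h5 + (-1/20 : ℂ) * h6 + (5/16 : ℂ) * h7 + (5/16 : ℂ) * h8
    have h003 : coeff (mm 0 0 3) F = 0 := by
      linear_combination (125/216 : ℂ) * h0 + (125/56 : ℂ) * h1 + (1/36 : ℂ) * h2 + (1/54 : ℂ) * h3 + (-1/12 : ℂ) * h4 + (1/42 : ℂ) * h5 + (1/18 : ℂ) * h6 + (-25/72 : ℂ) * h7 + (-25/72 : ℂ) * h8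
    have h120 : coeff (mm 1 2 0) F = coeff (mm 2 1 0) F := by
      linear_combination (-29/216 : ℂ) * h0 + (39/56 : ℂ) * h1 + (-7/900 : ℂ) * h2 + (-2/675 : ℂ) * h3 + (-3/100 : ℂ) * h4 + (2/175 : ℂ) * h5 + (1/90 : ℂ) * h6 + (1/72 : ℂ) * h7 + (-11/72 : ℂ) * h8
    have h111 : coeff (mm 1 1 1) F = -5 * coeff (mm 2 1 0) F := by
      linear_combination (65/432 : ℂ) * h0 + (-75/112 : ℂ) * h1 + (37/1800 : ℂ) * h2 + (31/2700 : ℂ) * h3 + (19/600 : ℂ) * h4 + (-43/2100 : ℂ) * h5 + (13/900 : ℂ) * h6 + (-25/144 : ℂ) * h7 + (35/144 : ℂ) * h8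
    refine ⟨coeff (mm 2 1 0) F, ?_⟩
    conv_lhs => rw [hd]
    rw [h300, h201, h102, h030, h021, h012, h003, h120, h111]
    rw [MvPolynomial.smul_eq_C_mul]
    simp only [map_zero, map_mul, map_neg, map_ofNat]
    ring
  refine ⟨part1, ?_⟩
  have hGh : (X 0 * X 1 * (X 0 + X 1 - 5 * X 2) : MvPolynomial (Fin 3) ℂ).IsHomogeneous 3 := by
    have hxy : (X 0 * X 1 : MvPolynomial (Fin 3) ℂ).IsHomogeneous 2 :=
      (isHomogeneous_X _ _).mul (isHomogeneous_X _ _)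
    have h5x : ((5 : MvPolynomial (Fin 3) ℂ) * X 2).IsHomogeneous 1 := by
      rw [show ((5 : MvPolynomial (Fin 3) ℂ)) = C 5 from (map_ofNat C 5).symm]
      simpa using (isHomogeneous_C (Fin 3) (5 : ℂ)).mul (isHomogeneous_X _ 2)
    have hlin : (X 0 + X 1 - 5 * X 2 : MvPolynomial (Fin 3) ℂ).IsHomogeneous 1 :=
      ((isHomogeneous_X _ _).add (isHomogeneous_X _ _)).sub h5x
    simpa using hxy.mul hlin
  have hGne : (X 0 * X 1 * (X 0 + X 1 - 5 * X 2) : MvPolynomial (Fin 3) ℂ) ≠ 0 := by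
    intro h
    have h2 : (eval (![1, 1, 0] : Fin 3 → ℂ)) (X 0 * X 1 * (X 0 + X 1 - 5 * X 2)) = 0 := by
      rw [h]; simp
    simp only [eval_mul, eval_add, eval_sub, eval_X, Matrix.cons_val_zero, Matrix.cons_val_one,
      Matrix.head_cons, Matrix.cons_val_two, Matrix.tail_cons] at h2
    norm_num at h2
  have hspan : (homogeneousSubmodule (Fin 3) ℂ 3 ⊓
        ⨅ i : Fin 9, LinearMap.ker (aeval (pts i)).toLinearMap)
      = Submodule.span ℂ {(X 0 * X 1 * (X 0 + X 1 - 5 * X 2) : MvPolynomial (Fin 3) ℂ)} := by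
    apply le_antisymm
    · intro F hFm
      rw [Submodule.mem_inf] at hFm
      obtain ⟨hF1, hF2⟩ := hFm
      rw [Submodule.mem_iInf] at hF2
      obtain ⟨c, hc⟩ := part1 F ((mem_homogeneousSubmodule _ _).mp hF1)
        (fun i => by
          have := LinearMap.mem_ker.mp (hF2 i)
          simpa [aeval_eq_eval'] using this)
      rw [hc]
      exact Submodule.smul_mem _ _ (Submodule.mem_span_singleton_self _)
    · rw [Submodule.span_le, Set.singleton_subset_iff]
      rw [SetLike.mem_coe, Submodule.mem_inf]
      refine ⟨(mem_homogeneousSubmodule _ _).mpr hGh, ?_⟩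
      rw [Submodule.mem_iInf]
      intro i
      rw [LinearMap.mem_ker]
      fin_cases i
      · show eval (![0, 1, 1] : Fin 3 → ℂ) (X 0 * X 1 * (X 0 + X 1 - 5 * X 2)) = 0
        simp only [eval_mul, eval_add, eval_sub, eval_X, eval_ofNat, Matrix.cons_val_zero,
          Matrix.cons_val_one, Matrix.head_cons, Matrix.cons_val_two, Matrix.tail_cons]
        norm_num
      · show eval (![1, 0, 1] : Fin 3 → ℂ) (X 0 * X 1 * (X 0 + X 1 - 5 * X 2)) = 0
        simp only [eval_mul, eval_add, eval_sub, eval_X, eval_ofNat, Matrix.cons_val_zero,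
          Matrix.cons_val_one, Matrix.head_cons, Matrix.cons_val_two, Matrix.tail_cons]
        norm_num
      · show eval (![0, -5, 1] : Fin 3 → ℂ) (X 0 * X 1 * (X 0 + X 1 - 5 * X 2)) = 0
        simp only [eval_mul, eval_add, eval_sub, eval_X, eval_ofNat, Matrix.cons_val_zero,
          Matrix.cons_val_one, Matrix.head_cons, Matrix.cons_val_two, Matrix.tail_cons]
        norm_num
      · show eval (![0, 10, 1] : Fin 3 → ℂ) (X 0 * X 1 * (X 0 + X 1 - 5 * X 2)) = 0
        simp only [eval_mul, eval_add, eval_sub, eval_X, eval_ofNat, Matrix.cons_val_zero,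
          Matrix.cons_val_one, Matrix.head_cons, Matrix.cons_val_two, Matrix.tail_cons]
        norm_num
      · show eval (![5, 0, 3] : Fin 3 → ℂ) (X 0 * X 1 * (X 0 + X 1 - 5 * X 2)) = 0
        simp only [eval_mul, eval_add, eval_sub, eval_X, eval_ofNat, Matrix.cons_val_zero,
          Matrix.cons_val_one, Matrix.head_cons, Matrix.cons_val_two, Matrix.tail_cons]
        norm_num
      · show eval (![10, 0, 3] : Fin 3 → ℂ) (X 0 * X 1 * (X 0 + X 1 - 5 * X 2)) = 0
        simp only [eval_mul, eval_add, eval_sub, eval_X, eval_ofNat, Matrix.cons_val_zero,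
          Matrix.cons_val_one, Matrix.head_cons, Matrix.cons_val_two, Matrix.tail_cons]
        norm_num
      · show eval (![5, 5, 2] : Fin 3 → ℂ) (X 0 * X 1 * (X 0 + X 1 - 5 * X 2)) = 0
        simp only [eval_mul, eval_add, eval_sub, eval_X, eval_ofNat, Matrix.cons_val_zero,
          Matrix.cons_val_one, Matrix.head_cons, Matrix.cons_val_two, Matrix.tail_cons]
        norm_num
      · show eval (![1, 4, 1] : Fin 3 → ℂ) (X 0 * X 1 * (X 0 + X 1 - 5 * X 2)) = 0
        simp only [eval_mul, eval_add, eval_sub, eval_X, eval_ofNat, Matrix.cons_val_zero,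
          Matrix.cons_val_one, Matrix.head_cons, Matrix.cons_val_two, Matrix.tail_cons]
        norm_num
      · show eval (![4, 1, 1] : Fin 3 → ℂ) (X 0 * X 1 * (X 0 + X 1 - 5 * X 2)) = 0
        simp only [eval_mul, eval_add, eval_sub, eval_X, eval_ofNat, Matrix.cons_val_zero,
          Matrix.cons_val_one, Matrix.head_cons, Matrix.cons_val_two, Matrix.tail_cons]
        norm_num
  rw [hspan]
  exact finrank_span_singleton hGne
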